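/- arXiv:1807.03858 — 5 statements merged into one kernel-verified Lean document; each statement's English description precedes it below -/
import Mathlib

section
/- Let Π be a compact metric space (of policies) with metric d, let 𝓜 be a set (of models) containing a distinguished element M*, let V : Π × 𝓜 → ℝ be such that π ↦ V(π, M*) is continuous, and let D : Π × 𝓜 × Π → ℝ≥0, written D_{π_ref}(M, π), satisfy: (R1) V(π, M*) ≥ V(π, M) − D_{π_ref}(M, π) for all π_ref ∈ Π, M ∈ 𝓜 and all π with d(π, π_ref) ≤ δ; and (R2) D_{π_ref}(M*, π) = 0 for all π, π_ref. Fix δ > 0 and suppose a sequence (π_k, M_k) is generated by π_0 ∈ Π and, for each k, (π_{k+1}, M_{k+1}) is a maximizer of V(π, M) − D_{π_k}(M, π) over π ∈ Π, M ∈ 𝓜 subject to d(π, π_k) ≤ δ. Then V(π_0, M*) ≤ V(π_1, M*) ≤ ⋯ ≤ V(π_T, M*) for every T, and the values V(π_k, M*) converge to V(π̄, M*) for some π̄ ∈ Π that is a local maximum of π ↦ V(π, M*), i.e., there is an open d-ball around π̄ in which no policy has a strictly larger value under M*. -/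
/-!
STATEMENT 0: Monotone improvement and convergence to a local maximum for the
meta-algorithm.  `Pol` is a compact metric space of policies, `Mod` a set of
models containing the true model `Mstar`, `V π M` the value of policy `π`
under model `M`, and `D πref M π` a discrepancy bound satisfying (R1) and (R2).
The sequence `(πseq (k+1), Mseq (k+1))` maximizes `V π M − D (πseq k) M π`
over the trust region `dist π (πseq k) ≤ δ`.
-/

theorem meta_algorithm_monotone_and_local_max
    {Pol : Type*} [MetricSpace Pol] [CompactSpace Pol]
    {Mod : Type*} (Mstar : Mod)
    (V : Pol → Mod → ℝ) (hVcont : Continuous fun p => V p Mstar)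
    (D : Pol → Mod → Pol → ℝ) (hDnonneg : ∀ πref M p, 0 ≤ D πref M p)
    (δ : ℝ) (hδ : 0 < δ)
    -- (R1): the lower bound is valid in a δ-neighborhood of any reference policy
    (hR1 : ∀ πref M p, dist p πref ≤ δ → V p Mstar ≥ V p M - D πref M p)
    -- (R2): the discrepancy vanishes at the true model
    (hR2 : ∀ p πref, D πref Mstar p = 0)
    (πseq : ℕ → Pol) (Mseq : ℕ → Mod)
    -- at each iteration, (πseq (k+1), Mseq (k+1)) is a maximizer of the lower
    -- bound over the trust region
    (hstep : ∀ k, dist (πseq (k + 1)) (πseq k) ≤ δ ∧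
      ∀ (p : Pol) (M : Mod), dist p (πseq k) ≤ δ →
        V p M - D (πseq k) M p
          ≤ V (πseq (k + 1)) (Mseq (k + 1)) - D (πseq k) (Mseq (k + 1)) (πseq (k + 1))) :
    Monotone (fun k => V (πseq k) Mstar) ∧
    ∃ πbar : Pol,
      Filter.Tendsto (fun k => V (πseq k) Mstar) Filter.atTop (nhds (V πbar Mstar)) ∧
      ∃ ε > 0, ∀ p : Pol, dist p πbar < ε → V p Mstar ≤ V πbar Mstar := by
  -- monotonicity
  have key : ∀ k, V (πseq k) Mstar ≤ V (πseq (k + 1)) Mstar := by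
    intro k
    have h1 := (hstep k).2 (πseq k) Mstar (by simp [hδ.le])
    rw [hR2] at h1
    have h2 := hR1 (πseq k) (Mseq (k + 1)) (πseq (k + 1)) (hstep k).1
    have h3 : V (πseq (k + 1)) (Mseq (k + 1)) - D (πseq k) (Mseq (k + 1)) (πseq (k + 1))
        ≤ V (πseq (k + 1)) Mstar := h2
    linarith
  have hmono : Monotone (fun k => V (πseq k) Mstar) :=
    monotone_nat_of_le_succ key
  refine ⟨hmono, ?_⟩
  -- boundedness
  have hbdd : BddAbove (Set.range fun k => V (πseq k) Mstar) := by
    obtain ⟨C, hC⟩ := (isCompact_univ.image hVcont).bddAbove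
    refine ⟨C, ?_⟩
    rintro x ⟨k, rfl⟩
    exact hC ⟨πseq k, trivial, rfl⟩
  set L : ℝ := ⨆ k, V (πseq k) Mstar with hL
  have htend : Filter.Tendsto (fun k => V (πseq k) Mstar) Filter.atTop (nhds L) :=
    tendsto_atTop_ciSup hmono hbdd
  -- convergent subsequence
  obtain ⟨πbar, -, φ, hφmono, hφtend⟩ :=
    isCompact_univ.tendsto_subseq (fun n => Set.mem_univ (πseq n))
  have hVtend : Filter.Tendsto (fun j => V (πseq (φ j)) Mstar) Filter.atTop
      (nhds (V πbar Mstar)) := (hVcont.tendsto πbar).comp hφtend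
  have hVtend' : Filter.Tendsto (fun j => V (πseq (φ j)) Mstar) Filter.atTop (nhds L) :=
    htend.comp hφmono.tendsto_atTop
  have hLeq : V πbar Mstar = L := tendsto_nhds_unique hVtend hVtend'
  refine ⟨πbar, by rw [hLeq]; exact htend, δ / 2, by linarith, ?_⟩
  intro p hp
  -- pick j with dist (πseq (φ j)) πbar < δ/2
  have : ∀ᶠ j in Filter.atTop, dist (πseq (φ j)) πbar < δ / 2 :=
    (Metric.tendsto_nhds.mp hφtend) (δ / 2) (by linarith)
  obtain ⟨j, hj⟩ := this.exists
  have hdist : dist p (πseq (φ j)) ≤ δ := by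
    have := dist_triangle p πbar (πseq (φ j))
    rw [dist_comm (πseq (φ j)) πbar] at hj
    linarith
  have h1 := (hstep (φ j)).2 p Mstar hdist
  rw [hR2] at h1
  have h2 := hR1 (πseq (φ j)) (Mseq (φ j + 1)) (πseq (φ j + 1)) (hstep (φ j)).1
  have h3 : V (πseq (φ j + 1)) Mstar ≤ L :=
    le_ciSup hbdd (φ j + 1)
  rw [hLeq]
  linarith
end

section
/- Let Π be a set (of policies) with a function d : Π × Π → ℝ≥0, let 𝓜 be a set (of models) containing M*, let V : Π × 𝓜 → ℝ, and let L, L̂ : Π × 𝓜 × Π → ℝ, written L^{π,M}_{π_ref} and L̂^{π,M}_{π_ref}, satisfy: (i) L^{π,M}_{π_ref} ≤ V(π, M*) whenever d(π, π_ref) ≤ δ; (ii) L^{π,M*}_{π_ref} = V(π, M*) for all π, π_ref; and (iii) |L̂^{π,M}_{π_ref} − L^{π,M}_{π_ref}| ≤ ε/4 for all π, M, π_ref. Suppose (π_{t+1}, M_{t+1}) maximizes L̂^{π,M}_{π_t} over π ∈ Π, M ∈ 𝓜 subject to d(π, π_t) ≤ δ. If π_t is not a (δ, ε)-local maximum of π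 ↦ V(π, M*), i.e., there exists π′ ∈ Π with d(π′, π_t) ≤ δ and V(π′, M*) ≥ V(π_t, M*) + ε, then V(π_{t+1}, M*) ≥ V(π_t, M*) + ε/2. -/
/-!
STATEMENT 1: One-step improvement guarantee from approximate optimization of
an empirical lower bound.  `Pol` is a set of policies with a nonnegative
closeness function `d`, `Mod` a set of models containing the true model
`Mstar`, `V p M` the value of policy `p` under model `M`, `L p M πref` the
population lower bound and `Lhat p M πref` its empirical estimate.
-/

theorem one_step_improvement
    {Pol : Type*} {Mod : Type*} (Mstar : Mod)
    (d : Pol → Pol → ℝ) (hd : ∀ p q, 0 ≤ d p q)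
    (V : Pol → Mod → ℝ)
    (L Lhat : Pol → Mod → Pol → ℝ)
    (δ ε : ℝ)
    -- (i): L is a lower bound of the true value in the δ-neighborhood
    (hi : ∀ (p πref : Pol) (M : Mod), d p πref ≤ δ → L p M πref ≤ V p Mstar)
    -- (ii): L is exact at the true model
    (hii : ∀ p πref : Pol, L p Mstar πref = V p Mstar)
    -- (iii): uniform convergence of the empirical estimate
    (hiii : ∀ (p πref : Pol) (M : Mod), |Lhat p M πref - L p M πref| ≤ ε / 4)
    (πt πt1 : Pol) (Mt1 : Mod)
    -- (πt1, Mt1) maximizes Lhat over the trust region around πt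
    (hfeas : d πt1 πt ≤ δ)
    (hopt : ∀ (p : Pol) (M : Mod), d p πt ≤ δ → Lhat p M πt ≤ Lhat πt1 Mt1 πt)
    -- πt is not a (δ, ε)-local maximum of V(·, Mstar)
    (π' : Pol) (hπ'close : d π' πt ≤ δ) (hπ'gap : V π' Mstar ≥ V πt Mstar + ε) :
    V πt1 Mstar ≥ V πt Mstar + ε / 2 := by
  have h1 := abs_le.mp (hiii πt1 πt Mt1)
  have h2 := abs_le.mp (hiii π' πt Mstar)
  have h3 := hopt π' Mstar hπ'close
  have h4 := hi πt1 πt Mt1 hfeas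
  have h5 := hii π' πt
  linarith
end

section
/- (Telescoping lemma) For any policy π and any two transition models M and M̂ (Markov kernels from S×A to S), V^{π,M̂} − V^{π,M} = (γ/(1−γ)) · E_{S ∼ ρ^{π,M}, A ∼ π(·|S)}[ G^{π,M̂}(S, A) ], where G^{π,M̂}(s,a) = E_{ŝ′∼M̂(·|s,a)}[V^{π,M̂}(ŝ′)] − E_{s′∼M(·|s,a)}[V^{π,M̂}(s′)]. -/
/-!
STATEMENT 2 (Telescoping lemma).  For a policy `π` (Markov kernel from states
to actions) and two transition models `M`, `Mhat` (Markov kernels from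
state-action pairs to states),
`V^{π,M̂} − V^{π,M} = (γ/(1−γ)) · E_{S ∼ ρ^{π,M}, A ∼ π(·|S)}[G^{π,M̂}(S,A)]`.
-/

open MeasureTheory ProbabilityTheory

noncomputable section

variable {S A : Type*} [MeasurableSpace S] [MeasurableSpace A]

/-- One step of the closed-loop dynamics: from state law `μ`, sample `s ∼ μ`,
`a ∼ π(·|s)`, and next state `s' ∼ M(·|s,a)`. -/
def step (π : Kernel S A) (M : Kernel (S × A) S) (μ : Measure S) : Measure S :=
  μ.bind fun s => (π s).bind fun a => M (s, a)

/-- Law of the state at time `t`, starting from `μ₀`. -/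
def stateLaw (π : Kernel S A) (M : Kernel (S × A) S) (μ₀ : Measure S) : ℕ → Measure S
  | 0 => μ₀
  | t + 1 => step π M (stateLaw π M μ₀ t)

/-- Value function `V^{π,M}(s)`: expected discounted total reward starting at `s`. -/
def valueFn (π : Kernel S A) (M : Kernel (S × A) S) (R : S × A → ℝ) (γ : ℝ) (s : S) : ℝ :=
  ∑' t : ℕ, γ ^ t * ∫ s', ∫ a, R (s', a) ∂(π s') ∂(stateLaw π M (Measure.dirac s) t)

/-- Aggregate value `V^{π,M} = E_{S₀∼μ₀}[V^{π,M}(S₀)]`. -/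
def value (π : Kernel S A) (M : Kernel (S × A) S) (R : S × A → ℝ) (γ : ℝ)
    (μ₀ : Measure S) : ℝ :=
  ∫ s, valueFn π M R γ s ∂μ₀

/-- Discounted state visitation distribution `ρ^{π,M} = (1−γ) Σ_t γ^t law(S_t)`. -/
def visitation (π : Kernel S A) (M : Kernel (S × A) S) (γ : ℝ) (μ₀ : Measure S) : Measure S :=
  Measure.sum fun t : ℕ => (ENNReal.ofReal ((1 - γ) * γ ^ t)) • stateLaw π M μ₀ t

/-- `G^{π,M̂}(s,a) = E_{ŝ′∼M̂(·|s,a)}[V^{π,M̂}(ŝ′)] − E_{s′∼M(·|s,a)}[V^{π,M̂}(s′)]`. -/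
def Gsa (π : Kernel S A) (Mhat M : Kernel (S × A) S) (R : S × A → ℝ) (γ : ℝ)
    (s : S) (a : A) : ℝ :=
  (∫ s', valueFn π Mhat R γ s' ∂(Mhat (s, a))) - ∫ s', valueFn π Mhat R γ s' ∂(M (s, a))

section Aux

open Filter Topology

variable {α β : Type*} [MeasurableSpace α] [MeasurableSpace β]

lemma integrable_of_abs_le {f : α → ℝ} (hm : Measurable f) {c : ℝ}
    (hb : ∀ x, |f x| ≤ c) (μ : Measure α) [IsFiniteMeasure μ] : Integrable f μ :=
  Integrable.mono' (integrable_const c) hm.aestronglyMeasurable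
    (Filter.Eventually.of_forall fun x => by simpa [Real.norm_eq_abs] using hb x)

lemma abs_integral_le_of_abs_le {f : α → ℝ} {c : ℝ}
    (hb : ∀ x, |f x| ≤ c) (μ : Measure α) [IsProbabilityMeasure μ] :
    |∫ x, f x ∂μ| ≤ c := by
  have h := norm_integral_le_of_norm_le_const (f := f) (μ := μ) (C := c)
    (Filter.Eventually.of_forall fun x => by simpa [Real.norm_eq_abs] using hb x)
  simpa [Real.norm_eq_abs, measure_univ] using h

lemma summable_of_abs_le_geom {γ c : ℝ} (hγ0 : 0 ≤ γ) (hγ1 : γ < 1) {g : ℕ → ℝ}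
    (h : ∀ t, |g t| ≤ γ ^ t * c) : Summable g :=
  Summable.of_abs (Summable.of_nonneg_of_le (fun t => abs_nonneg _) h
    ((summable_geometric_of_lt_one hγ0 hγ1).mul_right c))

lemma abs_tsum_le_geom {γ c : ℝ} (hγ0 : 0 ≤ γ) (hγ1 : γ < 1) {g : ℕ → ℝ}
    (h : ∀ t, |g t| ≤ γ ^ t * c) : |∑' t, g t| ≤ c / (1 - γ) := by
  have hs : Summable fun t => |g t| :=
    Summable.of_nonneg_of_le (fun t => abs_nonneg _) h
      ((summable_geometric_of_lt_one hγ0 hγ1).mul_right c)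
  have h1 : |∑' t, g t| ≤ ∑' t, |g t| := by
    simpa [Real.norm_eq_abs] using norm_tsum_le_tsum_norm (f := g) (by simpa [Real.norm_eq_abs] using hs)
  refine h1.trans ?_
  have h2 : ∑' t, |g t| ≤ ∑' t, γ ^ t * c :=
    Summable.tsum_le_tsum h hs ((summable_geometric_of_lt_one hγ0 hγ1).mul_right c)
  refine h2.trans_eq ?_
  rw [tsum_mul_right, tsum_geometric_of_lt_one hγ0 hγ1, div_eq_inv_mul, mul_comm]

lemma bind_eq_map_snd (μ : Measure α) [SFinite μ] (κ : Kernel α β) [IsSFiniteKernel κ] :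
    μ.bind ⇑κ = (μ.compProd κ).map Prod.snd := by
  ext s hs
  rw [Measure.bind_apply hs κ.measurable.aemeasurable, Measure.map_apply measurable_snd hs,
    Measure.compProd_apply (measurable_snd hs)]
  rfl

lemma integral_bind_kernel (μ : Measure α) [IsProbabilityMeasure μ]
    (κ : Kernel α β) [IsMarkovKernel κ]
    {f : β → ℝ} (hm : Measurable f) {c : ℝ} (hb : ∀ x, |f x| ≤ c) :
    ∫ x, f x ∂(μ.bind ⇑κ) = ∫ a, ∫ x, f x ∂(κ a) ∂μ := by
  rw [bind_eq_map_snd μ κ,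
    integral_map measurable_snd.aemeasurable hm.aestronglyMeasurable]
  exact Measure.integral_compProd
    (integrable_of_abs_le (hm.comp measurable_snd) (fun x => hb _) _)

lemma isProbabilityMeasure_bind (μ : Measure α) [IsProbabilityMeasure μ]
    (κ : Kernel α β) [IsMarkovKernel κ] : IsProbabilityMeasure (μ.bind ⇑κ) :=
  ⟨by rw [Measure.bind_apply MeasurableSet.univ κ.measurable.aemeasurable]; simp⟩

variable {S A : Type*} [MeasurableSpace S] [MeasurableSpace A]

/-- The closed-loop one-step kernel `s ↦ law of s'` with `a ∼ π s`, `s' ∼ M (s,a)`. -/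
def kap (π : Kernel S A) (M : Kernel (S × A) S) : Kernel S S :=
  M ∘ₖ (Kernel.id ×ₖ π)

instance (π : Kernel S A) [IsMarkovKernel π] (M : Kernel (S × A) S) [IsMarkovKernel M] :
    IsMarkovKernel (kap π M) := by
  rw [kap]; infer_instance

lemma kap_apply (π : Kernel S A) [IsMarkovKernel π] (M : Kernel (S × A) S) [IsMarkovKernel M]
    (s : S) : kap π M s = (π s).bind (fun a => M (s, a)) := by
  rw [kap, Kernel.comp_apply, Kernel.prod_apply, Kernel.id_apply, Measure.dirac_prod]
  ext t ht
  rw [Measure.bind_apply ht M.measurable.aemeasurable,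
    Measure.bind_apply (f := fun a => M (s, a)) ht (M.measurable.comp measurable_prodMk_left).aemeasurable,
    lintegral_map (M.measurable_coe ht) measurable_prodMk_left]

/-- `t`-step iterate of a kernel. -/
def kpow (κ : Kernel S S) : ℕ → Kernel S S
  | 0 => Kernel.id
  | t + 1 => κ ∘ₖ kpow κ t

instance kpow.instIsMarkovKernel (κ : Kernel S S) [IsMarkovKernel κ] (t : ℕ) :
    IsMarkovKernel (kpow κ t) := by
  induction t with
  | zero => rw [kpow]; infer_instance
  | succ t ih => rw [kpow]; infer_instance

lemma kpow_succ_right (κ : Kernel S S) [IsMarkovKernel κ] (t : ℕ) :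
    kpow κ (t + 1) = kpow κ t ∘ₖ κ := by
  induction t with
  | zero => show κ ∘ₖ Kernel.id = Kernel.id ∘ₖ κ; rw [Kernel.comp_id, Kernel.id_comp]
  | succ t ih =>
    show κ ∘ₖ kpow κ (t + 1) = (κ ∘ₖ kpow κ t) ∘ₖ κ
    rw [ih, Kernel.comp_assoc]

lemma stateLaw_eq_bind (π : Kernel S A) [IsMarkovKernel π]
    (M : Kernel (S × A) S) [IsMarkovKernel M] (μ : Measure S) (t : ℕ) :
    stateLaw π M μ t = μ.bind ⇑(kpow (kap π M) t) := by
  induction t with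
  | zero =>
    show μ = μ.bind ⇑(Kernel.id : Kernel S S)
    have h : ⇑(Kernel.id : Kernel S S) = Measure.dirac := funext Kernel.id_apply
    rw [h, Measure.bind_dirac]
  | succ t ih =>
    show step π M (stateLaw π M μ t) = _
    rw [ih, step,
      show (fun s => (π s).bind fun a => M (s, a)) = ⇑(kap π M) from
        funext fun s => (kap_apply π M s).symm,
      Measure.bind_bind (kpow (kap π M) t).measurable.aemeasurable (kap π M).measurable.aemeasurable,
      show (fun s => (kpow (kap π M) t s).bind ⇑(kap π M)) = ⇑(kpow (kap π M) (t + 1)) from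
        funext fun s => (Kernel.comp_apply _ _ s).symm]

end Aux

section Value

open Filter Topology

variable {S A : Type*} [MeasurableSpace S] [MeasurableSpace A]
variable (π : Kernel S A) [IsMarkovKernel π] (M : Kernel (S × A) S) [IsMarkovKernel M]

/-- Expected one-step reward under the policy. -/
def rwd (R : S × A → ℝ) : S → ℝ := fun s => ∫ a, R (s, a) ∂(π s)

/-- Expected reward at time `t` starting from `s`. -/
def wfn (R : S × A → ℝ) (t : ℕ) : S → ℝ :=
  fun s => ∫ s', rwd π R s' ∂(kpow (kap π M) t s)

variable {R : S × A → ℝ} {C γ : ℝ}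

lemma rwd_meas (hRmeas : Measurable R) : Measurable (rwd π R) :=
  (StronglyMeasurable.integral_kernel_prod_right' (κ := π)
    hRmeas.stronglyMeasurable).measurable

lemma rwd_abs (hRbdd : ∀ x, |R x| ≤ C) (s : S) : |rwd π R s| ≤ C :=
  abs_integral_le_of_abs_le (fun a => hRbdd _) _

lemma wfn_meas (hRmeas : Measurable R) (t : ℕ) : Measurable (wfn π M R t) :=
  (StronglyMeasurable.integral_kernel_prod_right' (κ := kpow (kap π M) t)
    ((rwd_meas π hRmeas).stronglyMeasurable.comp_measurable measurable_snd)).measurable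

lemma wfn_abs (hRbdd : ∀ x, |R x| ≤ C) (t : ℕ) (s : S) : |wfn π M R t s| ≤ C :=
  abs_integral_le_of_abs_le (rwd_abs π hRbdd) _

lemma valueFn_eq (s : S) :
    valueFn π M R γ s = ∑' t, γ ^ t * wfn π M R t s := by
  unfold valueFn wfn rwd
  refine tsum_congr fun t => ?_
  rw [stateLaw_eq_bind, Measure.dirac_bind (Kernel.measurable _)]

lemma term_abs (hRbdd : ∀ x, |R x| ≤ C) (hγ0 : 0 ≤ γ) (t : ℕ) (s : S) :
    |γ ^ t * wfn π M R t s| ≤ γ ^ t * C := by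
  rw [abs_mul, abs_pow, abs_of_nonneg hγ0]
  exact mul_le_mul_of_nonneg_left (wfn_abs π M hRbdd t s) (pow_nonneg hγ0 t)

lemma valueFn_abs (hRbdd : ∀ x, |R x| ≤ C) (hγ0 : 0 ≤ γ) (hγ1 : γ < 1) (s : S) :
    |valueFn π M R γ s| ≤ C / (1 - γ) := by
  rw [valueFn_eq]
  exact abs_tsum_le_geom hγ0 hγ1 (term_abs π M hRbdd hγ0 · s)

lemma valueFn_meas (hRmeas : Measurable R) (hRbdd : ∀ x, |R x| ≤ C)
    (hγ0 : 0 ≤ γ) (hγ1 : γ < 1) : Measurable (valueFn π M R γ) := by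
  refine measurable_of_tendsto_metrizable
    (f := fun n s => ∑ t ∈ Finset.range n, γ ^ t * wfn π M R t s)
    (fun n => Finset.measurable_sum _ fun t _ => ((wfn_meas π M hRmeas t).const_mul _)) ?_
  rw [tendsto_pi_nhds]
  intro s
  rw [valueFn_eq]
  exact (summable_of_abs_le_geom hγ0 hγ1 (term_abs π M hRbdd hγ0 · s)).hasSum.tendsto_sum_nat

lemma wfn_succ (hRmeas : Measurable R) (hRbdd : ∀ x, |R x| ≤ C) (t : ℕ) (s : S) :
    wfn π M R (t + 1) s = ∫ s', wfn π M R t s' ∂(kap π M s) := by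
  unfold wfn
  rw [kpow_succ_right, Kernel.comp_apply]
  exact integral_bind_kernel (kap π M s) (kpow (kap π M) t)
    (rwd_meas π hRmeas) (rwd_abs π hRbdd)

lemma integral_valueFn_eq (hRmeas : Measurable R) (hRbdd : ∀ x, |R x| ≤ C)
    (hγ0 : 0 ≤ γ) (hγ1 : γ < 1) (μ : Measure S) [IsProbabilityMeasure μ] :
    ∫ s, valueFn π M R γ s ∂μ = ∑' t, γ ^ t * ∫ s, wfn π M R t s ∂μ := by
  have hint : ∀ t : ℕ, Integrable (fun s => γ ^ t * wfn π M R t s) μ := fun t =>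
    integrable_of_abs_le ((wfn_meas π M hRmeas t).const_mul _)
      (term_abs π M hRbdd hγ0 t) μ
  have hswap : ∫ s, (∑' t, γ ^ t * wfn π M R t s) ∂μ
      = ∑' t, ∫ s, γ ^ t * wfn π M R t s ∂μ := by
    refine (integral_tsum_of_summable_integral_norm hint ?_).symm
    refine Summable.of_nonneg_of_le (fun t => integral_nonneg fun s => norm_nonneg _)
      (fun t => ?_) ((summable_geometric_of_lt_one hγ0 hγ1).mul_right C)
    calc ∫ s, ‖γ ^ t * wfn π M R t s‖ ∂μ
        ≤ ∫ _, γ ^ t * C ∂μ := by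
          refine integral_mono (hint t).norm (integrable_const _) fun s => ?_
          rw [Real.norm_eq_abs]; exact term_abs π M hRbdd hγ0 t s
      _ = γ ^ t * C := by simp
  calc ∫ s, valueFn π M R γ s ∂μ = ∫ s, (∑' t, γ ^ t * wfn π M R t s) ∂μ := by
        refine integral_congr_ae (Filter.Eventually.of_forall fun s => ?_)
        exact valueFn_eq π M s
    _ = ∑' t, ∫ s, γ ^ t * wfn π M R t s ∂μ := hswap
    _ = ∑' t, γ ^ t * ∫ s, wfn π M R t s ∂μ := tsum_congr fun t => integral_const_mul _ _

lemma bellman (hRmeas : Measurable R) (hRbdd : ∀ x, |R x| ≤ C)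
    (hγ0 : 0 ≤ γ) (hγ1 : γ < 1) (s : S) :
    valueFn π M R γ s
      = rwd π R s + γ * ∫ s', valueFn π M R γ s' ∂(kap π M s) := by
  have hsum : Summable fun t => γ ^ t * wfn π M R t s :=
    summable_of_abs_le_geom hγ0 hγ1 (term_abs π M hRbdd hγ0 · s)
  rw [valueFn_eq, Summable.tsum_eq_zero_add hsum]
  congr 1
  · show (1 : ℝ) * wfn π M R 0 s = rwd π R s
    rw [one_mul]
    show (∫ s', rwd π R s' ∂((Kernel.id : Kernel S S) s)) = rwd π R s
    rw [Kernel.id_apply, integral_dirac' _ _ (rwd_meas π hRmeas).stronglyMeasurable]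
  · rw [integral_valueFn_eq π M hRmeas hRbdd hγ0 hγ1 (kap π M s), ← tsum_mul_left]
    refine tsum_congr fun t => ?_
    rw [wfn_succ π M hRmeas hRbdd t s]
    ring

lemma value_eq (hRmeas : Measurable R) (hRbdd : ∀ x, |R x| ≤ C)
    (hγ0 : 0 ≤ γ) (hγ1 : γ < 1) (μ₀ : Measure S) [IsProbabilityMeasure μ₀] :
    value π M R γ μ₀ = ∑' t, γ ^ t * ∫ s, rwd π R s ∂(stateLaw π M μ₀ t) := by
  rw [value, integral_valueFn_eq π M hRmeas hRbdd hγ0 hγ1 μ₀]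
  refine tsum_congr fun t => ?_
  congr 1
  rw [stateLaw_eq_bind,
    integral_bind_kernel μ₀ _ (rwd_meas π hRmeas) (rwd_abs π hRbdd)]
  rfl

end Value

theorem telescoping_lemma
    (π : Kernel S A) [IsMarkovKernel π]
    (M Mhat : Kernel (S × A) S) [IsMarkovKernel M] [IsMarkovKernel Mhat]
    (R : S × A → ℝ) (hRmeas : Measurable R) (C : ℝ) (hRbdd : ∀ x, |R x| ≤ C)
    (γ : ℝ) (hγ0 : 0 ≤ γ) (hγ1 : γ < 1)
    (μ₀ : Measure S) [IsProbabilityMeasure μ₀] :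
    value π Mhat R γ μ₀ - value π M R γ μ₀ =
      γ / (1 - γ) *
        ∫ s, ∫ a, Gsa π Mhat M R γ s a ∂(π s) ∂(visitation π M γ μ₀) := by
  classical
  have h1γ : (0:ℝ) < 1 - γ := by linarith
  set Cv : ℝ := C / (1 - γ) with hCv
  set V : S → ℝ := valueFn π Mhat R γ with hV
  have hVmeas : Measurable V := valueFn_meas π Mhat hRmeas hRbdd hγ0 hγ1
  have hVbd : ∀ s, |V s| ≤ Cv := valueFn_abs π Mhat hRbdd hγ0 hγ1
  set g : S → ℝ := fun s => ∫ s', V s' ∂(kap π Mhat s) with hg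
  set h : S → ℝ := fun s => ∫ s', V s' ∂(kap π M s) with hh
  have hgmeas : Measurable g :=
    (StronglyMeasurable.integral_kernel_prod_right' (κ := kap π Mhat)
      (hVmeas.stronglyMeasurable.comp_measurable measurable_snd)).measurable
  have hhmeas : Measurable h :=
    (StronglyMeasurable.integral_kernel_prod_right' (κ := kap π M)
      (hVmeas.stronglyMeasurable.comp_measurable measurable_snd)).measurable
  have hgbd : ∀ s, |g s| ≤ Cv := fun s => abs_integral_le_of_abs_le hVbd _
  have hhbd : ∀ s, |h s| ≤ Cv := fun s => abs_integral_le_of_abs_le hVbd _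
  -- step 1 : the inner integral of Gsa
  have hGsa : ∀ s, (∫ a, Gsa π Mhat M R γ s a ∂(π s)) = g s - h s := by
    intro s
    have e1 : ∀ (N : Kernel (S × A) S), ∀ _ : IsMarkovKernel N,
        (∫ a, ∫ s', V s' ∂(N (s, a)) ∂(π s)) = ∫ s', V s' ∂(kap π N s) := by
      intro N hN
      have hco : (fun a => N (s, a))
          = ⇑(N.comap (Prod.mk s) measurable_prodMk_left) :=
        funext fun a => (Kernel.comap_apply N measurable_prodMk_left a).symm
      rw [kap_apply, hco,
        integral_bind_kernel (π s) (N.comap (Prod.mk s) measurable_prodMk_left)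
          hVmeas hVbd]
      simp only [Kernel.comap_apply]
    have hintN : ∀ (N : Kernel (S × A) S), ∀ _ : IsMarkovKernel N,
        Integrable (fun a => ∫ s', V s' ∂(N (s, a))) (π s) := by
      intro N hN
      have hmeas : Measurable fun a => ∫ s', V s' ∂(N (s, a)) := by
        have := (StronglyMeasurable.integral_kernel_prod_right'
          (κ := N.comap (Prod.mk s) measurable_prodMk_left)
          (hVmeas.stronglyMeasurable.comp_measurable measurable_snd)).measurable
        simpa [Kernel.comap_apply] using this
      exact integrable_of_abs_le hmeas
        (fun a => abs_integral_le_of_abs_le hVbd _) _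
    unfold Gsa
    rw [integral_sub (hintN Mhat inferInstance) (hintN M inferInstance),
      e1 Mhat inferInstance, e1 M inferInstance]
  -- state laws along M
  set ν : ℕ → Measure S := stateLaw π M μ₀ with hν
  have hprob : ∀ t, IsProbabilityMeasure (ν t) := fun t => by
    rw [hν, stateLaw_eq_bind]; exact isProbabilityMeasure_bind μ₀ _
  have hrmeas : Measurable (rwd π R) := rwd_meas π hRmeas
  have hrbd : ∀ s, |rwd π R s| ≤ C := rwd_abs π hRbdd
  have key1 : ∀ t, ∫ s, V s ∂(ν t)
      = (∫ s, rwd π R s ∂(ν t)) + γ * ∫ s, g s ∂(ν t) := by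
    intro t; haveI := hprob t
    calc ∫ s, V s ∂(ν t) = ∫ s, (rwd π R s + γ * g s) ∂(ν t) := by
          refine integral_congr_ae (Filter.Eventually.of_forall fun s => ?_)
          exact bellman π Mhat hRmeas hRbdd hγ0 hγ1 s
      _ = _ := by
          rw [integral_add (integrable_of_abs_le hrmeas hrbd _)
            ((integrable_of_abs_le hgmeas hgbd _).const_mul γ), integral_const_mul]
  have key2 : ∀ t, ∫ s, V s ∂(ν (t + 1)) = ∫ s, h s ∂(ν t) := by
    intro t; haveI := hprob t
    have hstep : ν (t + 1) = (ν t).bind ⇑(kap π M) := by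
      rw [hν]
      show step π M (stateLaw π M μ₀ t) = _
      rw [step, show (fun s => (π s).bind fun a => M (s, a)) = ⇑(kap π M) from
        funext fun s => (kap_apply π M s).symm]
    rw [hstep, integral_bind_kernel (ν t) (kap π M) hVmeas hVbd]
  set d : ℕ → ℝ :=
    fun t => γ ^ (t + 1) * ((∫ s, g s ∂(ν t)) - ∫ s, h s ∂(ν t)) with hd
  set u : ℕ → ℝ := fun n =>
    (∑ k ∈ Finset.range n, γ ^ k * ∫ s, rwd π R s ∂(ν k))
      + γ ^ n * ∫ s, V s ∂(ν n) with hu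
  have hud : ∀ t, u t - u (t + 1) = d t := by
    intro t
    rw [hu, hd]
    simp only [Finset.sum_range_succ]
    rw [key2 t, key1 t]
    ring
  have hdbd : ∀ t, |d t| ≤ γ ^ t * (γ * (2 * Cv)) := by
    intro t; haveI := hprob t
    have h1 : |(∫ s, g s ∂(ν t)) - ∫ s, h s ∂(ν t)| ≤ 2 * Cv := by
      calc |(∫ s, g s ∂(ν t)) - ∫ s, h s ∂(ν t)|
          ≤ |∫ s, g s ∂(ν t)| + |∫ s, h s ∂(ν t)| := abs_sub _ _
        _ ≤ Cv + Cv := add_le_add (abs_integral_le_of_abs_le hgbd _)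
            (abs_integral_le_of_abs_le hhbd _)
        _ = 2 * Cv := by ring
    calc |d t| = γ ^ (t + 1) * |(∫ s, g s ∂(ν t)) - ∫ s, h s ∂(ν t)| := by
          rw [hd]; rw [abs_mul, abs_pow, abs_of_nonneg hγ0]
      _ ≤ γ ^ (t + 1) * (2 * Cv) :=
          mul_le_mul_of_nonneg_left h1 (pow_nonneg hγ0 _)
      _ = γ ^ t * (γ * (2 * Cv)) := by ring
  have hdsum : Summable d := summable_of_abs_le_geom hγ0 hγ1 hdbd
  have hpartial : ∀ n, ∑ k ∈ Finset.range n, d k = u 0 - u n := by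
    intro n
    calc ∑ k ∈ Finset.range n, d k = ∑ k ∈ Finset.range n, (u k - u (k + 1)) :=
          Finset.sum_congr rfl fun k _ => (hud k).symm
      _ = u 0 - u n := Finset.sum_range_sub' u n
  have hLsum : Summable fun k => γ ^ k * ∫ s, rwd π R s ∂(ν k) := by
    refine summable_of_abs_le_geom (c := C) hγ0 hγ1 fun t => ?_
    haveI := hprob t
    rw [abs_mul, abs_pow, abs_of_nonneg hγ0]
    exact mul_le_mul_of_nonneg_left (abs_integral_le_of_abs_le hrbd _)
      (pow_nonneg hγ0 t)
  have hvalM : value π M R γ μ₀ = ∑' t, γ ^ t * ∫ s, rwd π R s ∂(ν t) :=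
    value_eq π M hRmeas hRbdd hγ0 hγ1 μ₀
  have hu0 : u 0 = value π Mhat R γ μ₀ := by
    rw [hu]
    simp only [Finset.range_zero, Finset.sum_empty, pow_zero, one_mul, zero_add]
    rfl
  have hulim : Filter.Tendsto u Filter.atTop (nhds (value π M R γ μ₀)) := by
    rw [hvalM]
    have h2 : Filter.Tendsto (fun n => γ ^ n * ∫ s, V s ∂(ν n))
        Filter.atTop (nhds 0) := by
      refine squeeze_zero_norm (a := fun n => γ ^ n * Cv) (fun n => ?_) ?_
      · haveI := hprob n
        rw [Real.norm_eq_abs, abs_mul, abs_pow, abs_of_nonneg hγ0]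
        exact mul_le_mul_of_nonneg_left (abs_integral_le_of_abs_le hVbd _)
          (pow_nonneg hγ0 n)
      · simpa using
          (tendsto_pow_atTop_nhds_zero_of_lt_one hγ0 hγ1).mul_const Cv
    simpa using hLsum.hasSum.tendsto_sum_nat.add h2
  have htsumd : ∑' t, d t = value π Mhat R γ μ₀ - value π M R γ μ₀ := by
    refine tendsto_nhds_unique hdsum.hasSum.tendsto_sum_nat ?_
    refine Filter.Tendsto.congr (fun n => (hpartial n).symm) ?_
    rw [← hu0]
    exact tendsto_const_nhds.sub hulim
  -- the visitation side
  have hGmeas : Measurable fun s => g s - h s := hgmeas.sub hhmeas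
  have hGbd : ∀ s, |g s - h s| ≤ 2 * Cv := fun s => by
    calc |g s - h s| ≤ |g s| + |h s| := abs_sub _ _
      _ ≤ Cv + Cv := add_le_add (hgbd s) (hhbd s)
      _ = 2 * Cv := by ring
  haveI hfin : IsFiniteMeasure (visitation π M γ μ₀) := by
    constructor
    rw [visitation, Measure.sum_apply _ MeasurableSet.univ]
    have hnn : ∀ t : ℕ, 0 ≤ (1 - γ) * γ ^ t := fun t =>
      mul_nonneg h1γ.le (pow_nonneg hγ0 t)
    have hsum : Summable fun t : ℕ => (1 - γ) * γ ^ t :=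
      (summable_geometric_of_lt_one hγ0 hγ1).mul_left _
    calc ∑' t, (ENNReal.ofReal ((1 - γ) * γ ^ t) • ν t) Set.univ
        = ∑' t, ENNReal.ofReal ((1 - γ) * γ ^ t) := by
          refine tsum_congr fun t => ?_
          haveI := hprob t
          rw [Measure.smul_apply, measure_univ, smul_eq_mul, mul_one]
      _ = ENNReal.ofReal (∑' t, (1 - γ) * γ ^ t) :=
          (ENNReal.ofReal_tsum_of_nonneg hnn hsum).symm
      _ < ⊤ := ENNReal.ofReal_lt_top
  have hvis : ∫ s, (g s - h s) ∂(visitation π M γ μ₀)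
      = ∑' t, ((1 - γ) * γ ^ t) * ∫ s, (g s - h s) ∂(ν t) := by
    have hint : Integrable (fun s => g s - h s) (visitation π M γ μ₀) :=
      integrable_of_abs_le hGmeas hGbd _
    rw [show visitation π M γ μ₀
        = Measure.sum fun t : ℕ => ENNReal.ofReal ((1 - γ) * γ ^ t) • ν t from rfl]
      at hint ⊢
    rw [integral_sum_measure hint]
    refine tsum_congr fun t => ?_
    rw [integral_smul_measure, ENNReal.toReal_ofReal
      (mul_nonneg h1γ.le (pow_nonneg hγ0 t)), smul_eq_mul]
  have hrhs : ∫ s, ∫ a, Gsa π Mhat M R γ s a ∂(π s) ∂(visitation π M γ μ₀)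
      = ∫ s, (g s - h s) ∂(visitation π M γ μ₀) :=
    integral_congr_ae (Filter.Eventually.of_forall hGsa)
  rw [hrhs, hvis, ← htsumd, ← tsum_mul_left]
  refine tsum_congr fun t => ?_
  haveI := hprob t
  rw [hd]
  rw [integral_sub (integrable_of_abs_le hgmeas hgbd _)
    (integrable_of_abs_le hhmeas hhbd _)]
  have hne : (1 : ℝ) - γ ≠ 0 := ne_of_gt h1γ
  field_simp
  ring


end
end

section
/- Let p and q be probability measures on the same measurable space with q ≪ p, and let f be a measurable function with ∫ f² dp < ∞ and f integrable with respect to both p and q. Then ( ∫ f dq − ∫ f dp )² ≤ χ²(q, p) · ∫ f² dp. -/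
/-!
STATEMENT 13: For probability measures `p`, `q` with `q ≪ p` and an
appropriately integrable function `f`,
`(∫ f dq − ∫ f dp)² ≤ χ²(q, p) · ∫ f² dp`.
(The inequality is stated in `ℝ≥0∞` so that it is meaningful even when
`χ²(q,p) = ∞`.)
-/

open MeasureTheory
open scoped ENNReal RealInnerProductSpace

noncomputable section

/-- Cauchy–Schwarz for integrals of real functions in L². -/
lemma aux_integral_mul_sq_le {α : Type*} [MeasurableSpace α] {μ : Measure α} {f g : α → ℝ}
    (hf : MemLp f 2 μ) (hg : MemLp g 2 μ) :
    (∫ x, f x * g x ∂μ) ^ 2 ≤ (∫ x, f x ^ 2 ∂μ) * (∫ x, g x ^ 2 ∂μ) := by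
  set F : Lp ℝ 2 μ := hf.toLp f
  set G : Lp ℝ 2 μ := hg.toLp g
  have hFf : (F : α → ℝ) =ᵐ[μ] f := hf.coeFn_toLp
  have hGg : (G : α → ℝ) =ᵐ[μ] g := hg.coeFn_toLp
  have h1 : ∫ x, f x * g x ∂μ = ⟪F, G⟫ := by
    rw [L2.inner_def]
    refine integral_congr_ae ?_
    filter_upwards [hFf, hGg] with x hx hy
    simp [hx, hy, RCLike.inner_apply, mul_comm]
  have h2 : ∫ x, f x ^ 2 ∂μ = ⟪F, F⟫ := by
    rw [L2.inner_def]
    refine integral_congr_ae ?_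
    filter_upwards [hFf] with x hx
    simp [hx, RCLike.inner_apply, sq]
  have h3 : ∫ x, g x ^ 2 ∂μ = ⟪G, G⟫ := by
    rw [L2.inner_def]
    refine integral_congr_ae ?_
    filter_upwards [hGg] with x hx
    simp [hx, RCLike.inner_apply, sq]
  rw [h1, h2, h3, sq]
  exact real_inner_mul_inner_self_le F G

open Classical in
/-- χ² divergence: `χ²(p,q) = ∫ (dp/dq)² dq − 1` if `p ≪ q`, `∞` otherwise. -/
def chiSq {α : Type*} [MeasurableSpace α] (p q : Measure α) : ℝ≥0∞ :=
  if p ≪ q then (∫⁻ x, p.rnDeriv q x ^ 2 ∂q) - 1 else ⊤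

theorem sq_integral_diff_le_chiSq_mul
    {α : Type*} [MeasurableSpace α] (p q : Measure α)
    [IsProbabilityMeasure p] [IsProbabilityMeasure q] (hqp : q ≪ p)
    (f : α → ℝ) (hf : Measurable f)
    (hfp : Integrable f p) (hfq : Integrable f q)
    (hf2 : Integrable (fun x => f x ^ 2) p) :
    ENNReal.ofReal ((∫ x, f x ∂q - ∫ x, f x ∂p) ^ 2)
      ≤ chiSq q p * ENNReal.ofReal (∫ x, f x ^ 2 ∂p) := by
  classical
  have hchi : chiSq q p = (∫⁻ x, q.rnDeriv p x ^ 2 ∂p) - 1 := by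
    simp [chiSq, hqp]
  -- case f = 0 a.e.
  by_cases hzero : ∫ x, f x ^ 2 ∂p = 0
  · have hsq_nonneg : 0 ≤ᵐ[p] fun x => f x ^ 2 := Filter.Eventually.of_forall fun x => sq_nonneg _
    have hae : (fun x => f x ^ 2) =ᵐ[p] 0 :=
      (integral_eq_zero_iff_of_nonneg_ae hsq_nonneg hf2).mp hzero
    have hfae : f =ᵐ[p] 0 := by
      filter_upwards [hae] with x hx
      exact pow_eq_zero_iff (n := 2) (by norm_num) |>.mp hx
    have hIp : ∫ x, f x ∂p = 0 := by
      rw [integral_congr_ae hfae]; simp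
    have hIq : ∫ x, f x ∂q = 0 := by
      rw [integral_congr_ae (hqp.ae_le hfae)]; simp
    simp [hIp, hIq]
  set g : α → ℝ≥0∞ := q.rnDeriv p
  set r : α → ℝ := fun x => (g x).toReal with hr
  have hg_meas : Measurable g := Measure.measurable_rnDeriv q p
  have hg_lt_top : ∀ᵐ x ∂p, g x < ∞ := Measure.rnDeriv_lt_top q p
  have hlint_g : ∫⁻ x, g x ∂p = 1 := by
    rw [Measure.lintegral_rnDeriv hqp]; simp
  by_cases htop : ∫⁻ x, g x ^ 2 ∂p = ∞
  · -- infinite χ² case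
    have hchi_top : chiSq q p = ∞ := by
      rw [hchi, htop]; simp
    rw [hchi_top]
    have hpos : 0 < ∫ x, f x ^ 2 ∂p := by
      rcases lt_or_eq_of_le (integral_nonneg (f := fun x => f x ^ 2) (fun x => sq_nonneg (f x))) with h | h
      · exact h
      · exact absurd h.symm hzero
    rw [ENNReal.top_mul (by simp [hpos])]
    exact le_top
  -- finite χ² case
  have hr_int2 : Integrable (fun x => r x ^ 2) p := by
    have := integrable_toReal_of_lintegral_ne_top (hg_meas.pow_const 2).aemeasurable htop
    refine this.congr ?_
    filter_upwards with x
    simp [hr, ENNReal.toReal_pow]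
  have hr_int : Integrable r p :=
    integrable_toReal_of_lintegral_ne_top hg_meas.aemeasurable (by simp [hlint_g])
  have hint_r : ∫ x, r x ∂p = 1 := by
    rw [hr]
    rw [Measure.integral_toReal_rnDeriv hqp]
    simp
  -- ∫⁻ g² = ofReal (∫ r²)
  have hlint_eq : ∫⁻ x, g x ^ 2 ∂p = ENNReal.ofReal (∫ x, r x ^ 2 ∂p) := by
    rw [ofReal_integral_eq_lintegral_ofReal hr_int2
      (Filter.Eventually.of_forall fun x => sq_nonneg _)]
    refine lintegral_congr_ae ?_
    filter_upwards [hg_lt_top] with x hx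
    rw [hr, ← ENNReal.toReal_pow, ENNReal.ofReal_toReal (by simp [hx.ne])]
  -- MemLp facts
  have hf_mem : MemLp f 2 p := (memLp_two_iff_integrable_sq hf.aestronglyMeasurable).mpr hf2
  have hr_mem : MemLp r 2 p :=
    (memLp_two_iff_integrable_sq hr_int.aestronglyMeasurable).mpr hr_int2
  -- ∫ f dq = ∫ f * r dp
  have hq_eq : ∫ x, f x ∂q = ∫ x, r x * f x ∂p := by
    rw [← integral_rnDeriv_smul hqp (f := f)]
    rfl
  -- key identity: ∫ f dq − ∫ f dp = ∫ f * (r − 1) dp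
  have hdiff : ∫ x, f x ∂q - ∫ x, f x ∂p = ∫ x, f x * (r x - 1) ∂p := by
    rw [hq_eq]
    have hi1 : Integrable (fun x => f x * r x) p := by
      have h := L2.integrable_inner (𝕜 := ℝ) (hf_mem.toLp f) (hr_mem.toLp r)
      refine h.congr ?_
      filter_upwards [hf_mem.coeFn_toLp, hr_mem.coeFn_toLp] with x hx hy
      simp [hx, hy, RCLike.inner_apply, mul_comm]
    rw [← integral_sub (hi1.congr (Filter.Eventually.of_forall fun x => mul_comm _ _)) hfp]
    congr 1
    ext x
    ring
  have hr1_mem : MemLp (fun x => r x - 1) 2 p := hr_mem.sub (memLp_const 1)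
  have hr1_int2 : Integrable (fun x => (r x - 1) ^ 2) p := hr1_mem.integrable_sq
  -- Cauchy–Schwarz
  have hCS : (∫ x, f x * (r x - 1) ∂p) ^ 2
      ≤ (∫ x, f x ^ 2 ∂p) * (∫ x, (r x - 1) ^ 2 ∂p) :=
    aux_integral_mul_sq_le hf_mem hr1_mem
  -- ∫ (r − 1)² = ∫ r² − 1
  have hvar : ∫ x, (r x - 1) ^ 2 ∂p = (∫ x, r x ^ 2 ∂p) - 1 := by
    have h1 : Integrable (fun x => r x ^ 2 - 2 * r x) p := hr_int2.sub (hr_int.const_mul 2)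
    calc ∫ x, (r x - 1) ^ 2 ∂p = ∫ x, (r x ^ 2 - 2 * r x) + 1 ∂p := by
          congr 1; ext x; ring
      _ = (∫ x, (r x ^ 2 - 2 * r x) ∂p) + ∫ _x, (1 : ℝ) ∂p := integral_add h1 (integrable_const 1)
      _ = (∫ x, r x ^ 2 ∂p) - 2 * ∫ x, r x ∂p + 1 := by
          rw [integral_sub hr_int2 (hr_int.const_mul 2), integral_const_mul]
          simp
      _ = (∫ x, r x ^ 2 ∂p) - 1 := by rw [hint_r]; ring
  -- χ² = ofReal (∫ (r−1)²)
  have hone_le : (1 : ℝ) ≤ ∫ x, r x ^ 2 ∂p := by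
    have h0 : (0 : ℝ) ≤ ∫ x, (r x - 1) ^ 2 ∂p := integral_nonneg fun x => sq_nonneg _
    linarith [hvar ▸ h0]
  have hchi_eq : chiSq q p = ENNReal.ofReal (∫ x, (r x - 1) ^ 2 ∂p) := by
    rw [hchi, hlint_eq, hvar, ENNReal.ofReal_sub _ zero_le_one]
    simp
  rw [hdiff, hchi_eq, ← ENNReal.ofReal_mul (integral_nonneg fun x => sq_nonneg _)]
  apply ENNReal.ofReal_le_ofReal
  calc (∫ x, f x * (r x - 1) ∂p) ^ 2
      ≤ (∫ x, f x ^ 2 ∂p) * (∫ x, (r x - 1) ^ 2 ∂p) := hCS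
    _ = (∫ x, (r x - 1) ^ 2 ∂p) * (∫ x, f x ^ 2 ∂p) := mul_comm _ _

end
end

section
/- Let P and P′ be column-stochastic matrices indexed by a finite state space, γ ∈ [0,1), Δ = γ(P′ − P), G = (Id − γP)⁻¹, G′ = (Id − γP′)⁻¹, and let μ be a probability vector. Set d = (1−γ) G μ and d′ = (1−γ) G′ μ (both probability vectors). Then ‖d − d′‖₁ ≤ (1−γ)^{-1} ‖Δ d‖₁. -/
open Matrix
open scoped BigOperators

noncomputable section

private lemma l1_contraction {n : Type*} [Fintype n] (A : Matrix n n ℝ)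
    (hA : ∀ i j, 0 ≤ A i j) (hcol : ∀ j, ∑ i, A i j = 1) (v : n → ℝ) :
    ∑ i, |A.mulVec v i| ≤ ∑ i, |v i| := by
  calc ∑ i, |A.mulVec v i| ≤ ∑ i, ∑ j, A i j * |v j| := by
        refine Finset.sum_le_sum fun i _ => ?_
        simp only [Matrix.mulVec, dotProduct]
        refine (Finset.abs_sum_le_sum_abs _ _).trans ?_
        refine Finset.sum_le_sum fun j _ => ?_
        rw [abs_mul, abs_of_nonneg (hA i j)]
    _ = ∑ j, (∑ i, A i j) * |v j| := by
        rw [Finset.sum_comm]; simp [Finset.sum_mul]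
    _ = ∑ j, |v j| := by simp [hcol]

private lemma l1_lower {n : Type*} [Fintype n] [DecidableEq n] (A : Matrix n n ℝ)
    (γ : ℝ) (hγ0 : 0 ≤ γ)
    (hA : ∀ i j, 0 ≤ A i j) (hcol : ∀ j, ∑ i, A i j = 1) (y : n → ℝ) :
    (1 - γ) * ∑ i, |y i| ≤ ∑ i, |((1 - γ • A).mulVec y) i| := by
  have h1 : ∀ i, ((1 - γ • A).mulVec y) i = y i - γ * A.mulVec y i := by
    intro i
    simp [Matrix.sub_mulVec, Matrix.smul_mulVec, Matrix.one_mulVec]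
  have h2 : ∑ i, (|y i| - γ * |A.mulVec y i|) ≤ ∑ i, |((1 - γ • A).mulVec y) i| := by
    refine Finset.sum_le_sum fun i _ => ?_
    rw [h1 i]
    have := abs_sub_abs_le_abs_sub (y i) (γ * A.mulVec y i)
    have habs : |γ * A.mulVec y i| = γ * |A.mulVec y i| := by
      rw [abs_mul, abs_of_nonneg hγ0]
    linarith
  have h3 : γ * ∑ i, |A.mulVec y i| ≤ γ * ∑ i, |y i| :=
    mul_le_mul_of_nonneg_left (l1_contraction A hA hcol y) hγ0
  rw [Finset.sum_sub_distrib, ← Finset.mul_sum] at h2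
  linarith

private lemma unit_one_sub {n : Type*} [Fintype n] [DecidableEq n] (A : Matrix n n ℝ)
    (γ : ℝ) (hγ0 : 0 ≤ γ) (hγ1 : γ < 1)
    (hA : ∀ i j, 0 ≤ A i j) (hcol : ∀ j, ∑ i, A i j = 1) :
    IsUnit (1 - γ • A) := by
  rw [← Matrix.mulVec_injective_iff_isUnit]
  intro x x' hx
  have hz : (1 - γ • A).mulVec (x - x') = 0 := by
    rw [Matrix.mulVec_sub, hx, sub_self]
  have := l1_lower A γ hγ0 hA hcol (x - x')
  rw [hz] at this
  simp only [Pi.zero_apply, abs_zero, Finset.sum_const_zero] at this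
  have hsum : ∑ i, |(x - x') i| ≤ 0 := by nlinarith
  have hnn : ∀ i ∈ Finset.univ, (0:ℝ) ≤ |(x - x') i| := fun i _ => abs_nonneg _
  have hall : ∀ i ∈ Finset.univ, |(x - x') i| = 0 :=
    (Finset.sum_eq_zero_iff_of_nonneg hnn).mp (le_antisymm hsum (Finset.sum_nonneg hnn))
  funext i
  have := hall i (Finset.mem_univ i)
  have : (x - x') i = 0 := abs_eq_zero.mp this
  simpa [sub_eq_zero] using this

theorem visitation_l1_perturbation_bound
    {n : Type*} [Fintype n] [DecidableEq n]
    (P P' : Matrix n n ℝ) (γ : ℝ) (hγ0 : 0 ≤ γ) (hγ1 : γ < 1)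
    (hPnonneg : ∀ i j, 0 ≤ P i j) (hPcol : ∀ j, ∑ i, P i j = 1)
    (hP'nonneg : ∀ i j, 0 ≤ P' i j) (hP'col : ∀ j, ∑ i, P' i j = 1)
    (μ : n → ℝ) (hμnonneg : ∀ i, 0 ≤ μ i) (hμsum : ∑ i, μ i = 1) :
    ∑ i, |((1 - γ) • ((1 - γ • P)⁻¹).mulVec μ) i
            - ((1 - γ) • ((1 - γ • P')⁻¹).mulVec μ) i|
      ≤ (1 - γ)⁻¹ *
          ∑ i, |(γ • (P' - P)).mulVec ((1 - γ) • ((1 - γ • P)⁻¹).mulVec μ) i| := by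
  set A : Matrix n n ℝ := 1 - γ • P with hAdef
  set B : Matrix n n ℝ := 1 - γ • P' with hBdef
  have hAu : IsUnit A := unit_one_sub P γ hγ0 hγ1 hPnonneg hPcol
  have hBu : IsUnit B := unit_one_sub P' γ hγ0 hγ1 hP'nonneg hP'col
  have hAd : IsUnit A.det := (Matrix.isUnit_iff_isUnit_det A).mp hAu
  have hBd : IsUnit B.det := (Matrix.isUnit_iff_isUnit_det B).mp hBu
  set d : n → ℝ := (1 - γ) • A⁻¹.mulVec μ with hd
  set w : n → ℝ := (γ • (P' - P)).mulVec d with hw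
  -- resolvent identity: A⁻¹ - B⁻¹ = - B⁻¹ * (γ•(P'-P)) * A⁻¹
  have hres : A⁻¹ - B⁻¹ = - (B⁻¹ * (γ • (P' - P)) * A⁻¹) := by
    have hdiff : A - B = γ • (P' - P) := by
      rw [hAdef, hBdef, smul_sub]; abel
    have : B⁻¹ * (A - B) * A⁻¹ = B⁻¹ * A * A⁻¹ - B⁻¹ * B * A⁻¹ := by
      rw [Matrix.mul_sub, Matrix.sub_mul]
    rw [Matrix.mul_assoc (B⁻¹) A A⁻¹, Matrix.mul_nonsing_inv A hAd,
        Matrix.nonsing_inv_mul B hBd, Matrix.mul_one, Matrix.one_mul] at this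
    calc A⁻¹ - B⁻¹ = -(B⁻¹ - A⁻¹) := (neg_sub _ _).symm
      _ = -(B⁻¹ * (A - B) * A⁻¹) := by rw [this]
      _ = - (B⁻¹ * (γ • (P' - P)) * A⁻¹) := by rw [hdiff]
  -- d - d' = - B⁻¹.mulVec w
  have hkey : ∀ i, ((1 - γ) • A⁻¹.mulVec μ) i - ((1 - γ) • B⁻¹.mulVec μ) i
      = - (B⁻¹.mulVec w) i := by
    intro i
    have : ((A⁻¹ - B⁻¹).mulVec ((1 - γ) • μ)) i = - (B⁻¹.mulVec w) i := by
      rw [hres]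
      simp only [hw, hd, Matrix.neg_mulVec, ← Matrix.mulVec_mulVec,
        Matrix.mulVec_smul]
      simp [Matrix.mulVec_smul]
    rw [Matrix.sub_mulVec] at this
    simpa [Matrix.mulVec_smul] using this
  have hL : ∑ i, |((1 - γ) • A⁻¹.mulVec μ) i - ((1 - γ) • B⁻¹.mulVec μ) i|
      = ∑ i, |B⁻¹.mulVec w i| := by
    refine Finset.sum_congr rfl fun i _ => ?_
    rw [hkey i, abs_neg]
  -- bound on B⁻¹
  have hbound : (1 - γ) * ∑ i, |B⁻¹.mulVec w i| ≤ ∑ i, |w i| := by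
    have := l1_lower P' γ hγ0 hP'nonneg hP'col (B⁻¹.mulVec w)
    have hBB : B.mulVec (B⁻¹.mulVec w) = w := by
      rw [Matrix.mulVec_mulVec, Matrix.mul_nonsing_inv B hBd, Matrix.one_mulVec]
    rw [← hBdef, hBB] at this
    exact this
  rw [hL]
  have hpos : (0:ℝ) < 1 - γ := by linarith
  exact (le_inv_mul_iff₀ hpos).mpr hbound

end
end
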